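/- Let X_n = Y₁ + ... + Y_n where the Y_i are independent Bernoulli random variables with P(Y_i = 1) = θ/(i-1+θ), θ > 0. Then conditionally on X_m = ℓ, for 0 < n ≤ m, P(X_{n-1} = k-1 | X_n = k) = S1(n-1,k-1)/S1(n,k) and P(X_{n-1} = k | X_n = k) = (n-1)·S1(n-1,k)/S1(n,k); in particular these quantities do not depend on θ. -/

import Mathlib

open Finset

/-- Unsigned Stirling numbers of the first kind. -/
def S1 : ℕ → ℕ → ℕ
  | 0, 0 => 1
  | 0, _ + 1 => 0
  | _ + 1, 0 => 0
  | n + 1, k + 1 => S1 n k + n * S1 n (k + 1)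

/-- Probability of an increment sequence `ω` for independent Bernoulli steps where the
`(i+1)`-st step has success probability `θ/(i+θ)`. -/
noncomputable def crpPathProb (m : ℕ) (θ : ℝ) (ω : Fin m → Bool) : ℝ :=
  ∏ i : Fin m, (if ω i then θ / ((i : ℕ) + θ) else 1 - θ / ((i : ℕ) + θ))

/-- Number of successes among the first `n` steps. -/
def crpWalk (m n : ℕ) (ω : Fin m → Bool) : ℕ :=
  (univ.filter fun i : Fin m => (i : ℕ) < n ∧ ω i = true).card

/-- Probability of an event. -/
noncomputable def crpPr (m : ℕ) (θ : ℝ) (A : Finset (Fin m → Bool)) : ℝ :=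
  ∑ ω ∈ A, crpPathProb m θ ω

lemma S1_pos : ∀ {n k : ℕ}, 0 < k → k ≤ n → 0 < S1 n k := by
  intro n
  induction n with
  | zero => intro k hk hkn; omega
  | succ n ih =>
    intro k hk hkn
    match k with
    | k + 1 =>
      rw [show S1 (n+1) (k+1) = S1 n k + n * S1 n (k+1) from rfl]
      rcases Nat.eq_zero_or_pos k with h | h
      · subst h
        rcases Nat.eq_zero_or_pos n with h' | h'
        · subst h'; simp [S1]
        · have : 0 < n * S1 n (0+1) := Nat.mul_pos h' (ih Nat.one_pos (by omega))
          omega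
      · have := ih h (by omega)
        omega

lemma crpWalk_eq_sum (m n : ℕ) (ω : Fin m → Bool) :
    crpWalk m n ω = ∑ i : Fin m, if ((i : ℕ) < n ∧ ω i = true) then 1 else 0 :=
  Finset.card_filter _ _

lemma crpWalk_snoc_of_le {m n : ℕ} (h : n ≤ m) (ω : Fin m → Bool) (b : Bool) :
    crpWalk (m+1) n (Fin.snoc ω b) = crpWalk m n ω := by
  rw [crpWalk_eq_sum, crpWalk_eq_sum, Fin.sum_univ_castSucc]
  simp [Nat.not_lt.mpr h]

lemma crpWalk_snoc_last {m : ℕ} (ω : Fin m → Bool) (b : Bool) :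
    crpWalk (m+1) (m+1) (Fin.snoc ω b) = crpWalk m m ω + (if b then 1 else 0) := by
  rw [crpWalk_eq_sum, crpWalk_eq_sum, Fin.sum_univ_castSucc]
  simp [Fin.is_lt, Nat.lt_succ_of_lt]

lemma crpPathProb_snoc (m : ℕ) (θ : ℝ) (ω : Fin m → Bool) (b : Bool) :
    crpPathProb (m+1) θ (Fin.snoc ω b) =
      crpPathProb m θ ω * (if b then θ / (m + θ) else 1 - θ / (m + θ)) := by
  rw [crpPathProb, Fin.prod_univ_castSucc, crpPathProb]
  simp

def snocEquiv (m : ℕ) : (Fin m → Bool) × Bool ≃ (Fin (m+1) → Bool) where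
  toFun x := Fin.snoc x.1 x.2
  invFun ω := (Fin.init ω, ω (Fin.last m))
  left_inv x := by simp
  right_inv ω := by simp

lemma sum_snoc {m : ℕ} (f : (Fin (m+1) → Bool) → ℝ) :
    ∑ ω, f ω = ∑ ω : Fin m → Bool, (f (Fin.snoc ω false) + f (Fin.snoc ω true)) := by
  rw [← Equiv.sum_comp (snocEquiv m) f, Fintype.sum_prod_type]
  refine Finset.sum_congr rfl fun ω _ => ?_
  rw [Fintype.sum_bool]
  simp [snocEquiv, add_comm]

lemma crpPr_filter_succ {m : ℕ} (θ : ℝ) (p : (Fin (m+1) → Bool) → Prop) [DecidablePred p] :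
    crpPr (m+1) θ (univ.filter p) =
      ∑ ω : Fin m → Bool,
        ((if p (Fin.snoc ω false) then crpPathProb m θ ω * (1 - θ / (m + θ)) else 0) +
         (if p (Fin.snoc ω true) then crpPathProb m θ ω * (θ / (m + θ)) else 0)) := by
  rw [crpPr, Finset.sum_filter, sum_snoc]
  refine Finset.sum_congr rfl fun ω _ => ?_
  simp [crpPathProb_snoc]

lemma sum_ite_crpPr {m : ℕ} (θ : ℝ) (q : (Fin m → Bool) → Prop) [DecidablePred q] (c : ℝ) :
    (∑ ω : Fin m → Bool, if q ω then crpPathProb m θ ω * c else 0) =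
      crpPr m θ (univ.filter q) * c := by
  rw [crpPr, Finset.sum_filter, Finset.sum_mul]
  refine Finset.sum_congr rfl fun ω _ => ?_
  split <;> simp

lemma crpPr_congr {m : ℕ} (θ : ℝ) {p q : (Fin m → Bool) → Prop}
    [DecidablePred p] [DecidablePred q] (h : ∀ ω, p ω ↔ q ω) :
    crpPr m θ (univ.filter p) = crpPr m θ (univ.filter q) := by
  rw [Finset.filter_congr fun ω _ => h ω]

lemma crpPathProb_nonneg {m : ℕ} {θ : ℝ} (hθ : 0 < θ) (ω : Fin m → Bool) :
    0 ≤ crpPathProb m θ ω := by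
  refine Finset.prod_nonneg fun i _ => ?_
  have h1 : (0:ℝ) < (i:ℕ) + θ := by positivity
  have h2 : θ / ((i:ℕ) + θ) ≤ 1 := by
    rw [div_le_one h1]; linarith [Nat.cast_nonneg (α := ℝ) (i:ℕ)]
  split
  · positivity
  · linarith

lemma crpPr_nonneg {m : ℕ} {θ : ℝ} (hθ : 0 < θ) (A : Finset (Fin m → Bool)) :
    0 ≤ crpPr m θ A :=
  Finset.sum_nonneg fun ω _ => crpPathProb_nonneg hθ ω

lemma marginal (θ : ℝ) (hθ : 0 < θ) :
    ∀ n k : ℕ, crpPr n θ (univ.filter fun ω => crpWalk n n ω = k) * ∏ i ∈ range n, ((i:ℝ) + θ)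
      = S1 n k * θ ^ k := by
  intro n
  induction n with
  | zero =>
    intro k
    match k with
    | 0 => simp [crpPr, crpPathProb, crpWalk, S1]
    | k + 1 => simp [crpPr, crpPathProb, crpWalk, S1]
  | succ n ih =>
    intro k
    have hne : ((n:ℝ) + θ) ≠ 0 := by positivity
    rw [crpPr_filter_succ]
    simp only [crpWalk_snoc_last, if_true, Bool.false_eq_true, if_false, add_zero]
    rw [Finset.sum_add_distrib, sum_ite_crpPr, sum_ite_crpPr]
    match k with
    | 0 =>
      have h0 : (univ.filter fun ω : Fin n → Bool => crpWalk n n ω + 1 = 0) = ∅ := by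
        apply Finset.filter_false_of_mem; intro ω _; omega
      rw [h0, prod_range_succ]
      have hcz : crpPr n θ (∅ : Finset (Fin n → Bool)) = 0 := by simp [crpPr]
      rw [hcz]
      have := ih 0
      rcases Nat.eq_zero_or_pos n with h' | h'
      · subst h'; simp [S1, crpPr, crpPathProb, crpWalk, div_self hθ.ne']
      · have hS : S1 n 0 = 0 := by match n, h' with | n+1, _ => rfl
        have hS' : (S1 (n+1) 0 : ℝ) = 0 := by simp [S1]
        rw [hS'] at *
        rw [hS] at this; simp at this
        rcases this with h | h
        · rw [h]; ring
        · exact absurd h (by positivity)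
    | k + 1 =>
      have h2 : (univ.filter fun ω : Fin n → Bool => crpWalk n n ω + 1 = k+1)
          = (univ.filter fun ω => crpWalk n n ω = k) := by
        apply Finset.filter_congr; intro ω _; simp
      have e1 := ih k
      have e2 := ih (k+1)
      have hs : (S1 (n+1) (k+1) : ℝ) = S1 n k + n * S1 n (k+1) := by
        rw [show S1 (n+1) (k+1) = S1 n k + n * S1 n (k+1) from rfl]; push_cast; ring
      rw [h2, prod_range_succ, hs]
      have hp1 : θ/((n:ℝ)+θ) * ((n:ℝ)+θ) = θ := div_mul_cancel₀ _ hne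
      have hp2 : (1 - θ/((n:ℝ)+θ)) * ((n:ℝ)+θ) = n := by field_simp; ring
      set A := crpPr n θ (univ.filter fun ω => crpWalk n n ω = k+1) with hA
      set B := crpPr n θ (univ.filter fun ω => crpWalk n n ω = k) with hB
      set Q := ∏ i ∈ range n, ((i:ℝ) + θ) with hQ
      calc (A * (1 - θ/((n:ℝ)+θ)) + B * (θ/((n:ℝ)+θ))) * (Q * ((n:ℝ)+θ))
          = (A * Q) * ((1 - θ/((n:ℝ)+θ)) * ((n:ℝ)+θ)) + (B * Q) * (θ/((n:ℝ)+θ) * ((n:ℝ)+θ)) := by ring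
        _ = (S1 n (k+1) * θ^(k+1)) * n + (S1 n k * θ^k) * θ := by rw [hp1, hp2, e1, e2]
        _ = ((S1 n k : ℝ) + n * S1 n (k+1)) * θ^(k+1) := by ring

lemma master {m : ℕ} (θ : ℝ) (ℓ : ℕ) (C : (Fin (m+1) → Bool) → Prop) (C' : (Fin m → Bool) → Prop)
    [DecidablePred C] [DecidablePred C'] (hC : ∀ ω b, C (Fin.snoc ω b) ↔ C' ω) :
    crpPr (m+1) θ (univ.filter fun ω => C ω ∧ crpWalk (m+1) (m+1) ω = ℓ) =
      (if ℓ = 0 then 0 else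
        crpPr m θ (univ.filter fun ω => C' ω ∧ crpWalk m m ω = ℓ - 1)) * (θ/(m+θ))
      + crpPr m θ (univ.filter fun ω => C' ω ∧ crpWalk m m ω = ℓ) * (1 - θ/(m+θ)) := by
  rw [crpPr_filter_succ]
  simp only [crpWalk_snoc_last, hC, if_true, Bool.false_eq_true, if_false, add_zero]
  rw [Finset.sum_add_distrib, sum_ite_crpPr, sum_ite_crpPr]
  match ℓ with
  | 0 =>
    have h0 : (univ.filter fun ω : Fin m → Bool => C' ω ∧ crpWalk m m ω + 1 = 0) = ∅ := by
      apply Finset.filter_false_of_mem; intro ω _ h; omega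
    rw [h0]
    simp [crpPr]
  | ℓ+1 =>
    have h1 : (univ.filter fun ω : Fin m → Bool => C' ω ∧ crpWalk m m ω + 1 = ℓ+1)
        = (univ.filter fun ω => C' ω ∧ crpWalk m m ω = ℓ) := by
      apply Finset.filter_congr; intro ω _
      constructor
      · rintro ⟨h, h'⟩; exact ⟨h, by omega⟩
      · rintro ⟨h, h'⟩; exact ⟨h, by omega⟩
    rw [h1]
    simp only [Nat.succ_ne_zero, if_false, Nat.add_sub_cancel]
    ring

noncomputable def Dfun (θ : ℝ) (n k m ℓ : ℕ) : ℝ :=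
  crpPr m θ (univ.filter fun ω => crpWalk m n ω = k ∧ crpWalk m m ω = ℓ)

noncomputable def N1fun (θ : ℝ) (n k m ℓ : ℕ) : ℝ :=
  crpPr m θ (univ.filter fun ω =>
    crpWalk m (n-1) ω = k-1 ∧ crpWalk m n ω = k ∧ crpWalk m m ω = ℓ)

noncomputable def N2fun (θ : ℝ) (n k m ℓ : ℕ) : ℝ :=
  crpPr m θ (univ.filter fun ω =>
    crpWalk m (n-1) ω = k ∧ crpWalk m n ω = k ∧ crpWalk m m ω = ℓ)

lemma Dfun_succ (θ : ℝ) {n m : ℕ} (k ℓ : ℕ) (h : n ≤ m) :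
    Dfun θ n k (m+1) ℓ =
      (if ℓ = 0 then 0 else Dfun θ n k m (ℓ-1)) * (θ/(m+θ))
      + Dfun θ n k m ℓ * (1 - θ/(m+θ)) := by
  unfold Dfun
  exact master θ ℓ _ _ (fun ω b => by rw [crpWalk_snoc_of_le h])

lemma N1fun_succ (θ : ℝ) {n m : ℕ} (k ℓ : ℕ) (h : n ≤ m) :
    N1fun θ n k (m+1) ℓ =
      (if ℓ = 0 then 0 else N1fun θ n k m (ℓ-1)) * (θ/(m+θ))
      + N1fun θ n k m ℓ * (1 - θ/(m+θ)) := by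
  unfold N1fun
  have e : crpPr (m+1) θ (univ.filter fun ω =>
      crpWalk (m+1) (n-1) ω = k-1 ∧ crpWalk (m+1) n ω = k ∧ crpWalk (m+1) (m+1) ω = ℓ)
      = crpPr (m+1) θ (univ.filter fun ω =>
        (crpWalk (m+1) (n-1) ω = k-1 ∧ crpWalk (m+1) n ω = k) ∧ crpWalk (m+1) (m+1) ω = ℓ) :=
    crpPr_congr θ fun ω => (and_assoc).symm
  have e1 : ∀ j, crpPr m θ (univ.filter fun ω =>
      (crpWalk m (n-1) ω = k-1 ∧ crpWalk m n ω = k) ∧ crpWalk m m ω = j)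
      = crpPr m θ (univ.filter fun ω =>
        crpWalk m (n-1) ω = k-1 ∧ crpWalk m n ω = k ∧ crpWalk m m ω = j) :=
    fun j => crpPr_congr θ fun ω => and_assoc
  rw [e, master θ ℓ _ (fun ω => crpWalk m (n-1) ω = k-1 ∧ crpWalk m n ω = k)
      (fun ω b => by rw [crpWalk_snoc_of_le (by omega), crpWalk_snoc_of_le h]), e1, e1]

lemma N2fun_succ (θ : ℝ) {n m : ℕ} (k ℓ : ℕ) (h : n ≤ m) :
    N2fun θ n k (m+1) ℓ =
      (if ℓ = 0 then 0 else N2fun θ n k m (ℓ-1)) * (θ/(m+θ))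
      + N2fun θ n k m ℓ * (1 - θ/(m+θ)) := by
  unfold N2fun
  have e : crpPr (m+1) θ (univ.filter fun ω =>
      crpWalk (m+1) (n-1) ω = k ∧ crpWalk (m+1) n ω = k ∧ crpWalk (m+1) (m+1) ω = ℓ)
      = crpPr (m+1) θ (univ.filter fun ω =>
        (crpWalk (m+1) (n-1) ω = k ∧ crpWalk (m+1) n ω = k) ∧ crpWalk (m+1) (m+1) ω = ℓ) :=
    crpPr_congr θ fun ω => (and_assoc).symm
  have e1 : ∀ j, crpPr m θ (univ.filter fun ω =>
      (crpWalk m (n-1) ω = k ∧ crpWalk m n ω = k) ∧ crpWalk m m ω = j)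
      = crpPr m θ (univ.filter fun ω =>
        crpWalk m (n-1) ω = k ∧ crpWalk m n ω = k ∧ crpWalk m m ω = j) :=
    fun j => crpPr_congr θ fun ω => and_assoc
  rw [e, master θ ℓ _ (fun ω => crpWalk m (n-1) ω = k ∧ crpWalk m n ω = k)
      (fun ω b => by rw [crpWalk_snoc_of_le (by omega), crpWalk_snoc_of_le h]), e1, e1]

lemma crpPr_empty (m : ℕ) (θ : ℝ) : crpPr m θ (∅ : Finset (Fin m → Bool)) = 0 := by
  simp [crpPr]

lemma D_zero (θ : ℝ) {n k ℓ : ℕ} (h : ℓ ≠ k) : Dfun θ n k n ℓ = 0 := by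
  unfold Dfun
  rw [Finset.filter_false_of_mem (fun ω _ hcon => h (by omega)), crpPr_empty]

lemma N1_zero (θ : ℝ) {n k ℓ : ℕ} (h : ℓ ≠ k) : N1fun θ n k n ℓ = 0 := by
  unfold N1fun
  rw [Finset.filter_false_of_mem (fun ω _ hcon => h (by omega)), crpPr_empty]

lemma N2_zero (θ : ℝ) {n k ℓ : ℕ} (h : ℓ ≠ k) : N2fun θ n k n ℓ = 0 := by
  unfold N2fun
  rw [Finset.filter_false_of_mem (fun ω _ hcon => h (by omega)), crpPr_empty]

lemma D_base (θ : ℝ) (hθ : 0 < θ) (n k : ℕ) :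
    Dfun θ n k n k * ∏ i ∈ range n, ((i:ℝ) + θ) = S1 n k * θ ^ k := by
  unfold Dfun
  rw [crpPr_congr θ (q := fun ω => crpWalk n n ω = k) (fun ω => ⟨fun h => h.1, fun h => ⟨h, h⟩⟩)]
  exact marginal θ hθ n k

lemma N1_base (θ : ℝ) (hθ : 0 < θ) (n k : ℕ) (hn : 0 < n) (hk : 0 < k) :
    N1fun θ n k n k * ∏ i ∈ range n, ((i:ℝ) + θ) = S1 (n-1) (k-1) * θ ^ k := by
  obtain ⟨n', rfl⟩ : ∃ n', n = n'+1 := ⟨n-1, by omega⟩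
  obtain ⟨k', rfl⟩ : ∃ k', k = k'+1 := ⟨k-1, by omega⟩
  unfold N1fun
  simp only [Nat.add_sub_cancel]
  rw [crpPr_congr θ (q := fun ω =>
      (crpWalk (n'+1) n' ω = k') ∧ crpWalk (n'+1) (n'+1) ω = k'+1) (fun ω => by
        constructor
        · rintro ⟨h1, h2, h3⟩; exact ⟨h1, h2⟩
        · rintro ⟨h1, h2⟩; exact ⟨h1, h2, h2⟩)]
  rw [master θ (k'+1) _ (fun ω : Fin n' → Bool => crpWalk n' n' ω = k')
      (fun ω b => by rw [crpWalk_snoc_of_le (le_refl n')])]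
  rw [if_neg (Nat.succ_ne_zero _)]
  simp only [Nat.add_sub_cancel]
  have h2 : (univ.filter fun ω : Fin n' → Bool =>
      crpWalk n' n' ω = k' ∧ crpWalk n' n' ω = k'+1) = ∅ :=
    Finset.filter_false_of_mem (fun ω _ h => by omega)
  have h1 : crpPr n' θ (univ.filter fun ω : Fin n' → Bool =>
        crpWalk n' n' ω = k' ∧ crpWalk n' n' ω = k')
      = crpPr n' θ (univ.filter fun ω => crpWalk n' n' ω = k') :=
    crpPr_congr θ (fun ω => ⟨fun h => h.1, fun h => ⟨h, h⟩⟩)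
  rw [h2, h1, crpPr_empty, prod_range_succ]
  have hne : ((n':ℝ) + θ) ≠ 0 := by positivity
  have e := marginal θ hθ n' k'
  set P := crpPr n' θ (univ.filter fun ω => crpWalk n' n' ω = k') with hP
  set Q := ∏ i ∈ range n', ((i:ℝ) + θ) with hQ
  calc (P * (θ/((n':ℝ)+θ)) + 0 * (1 - θ/((n':ℝ)+θ))) * (Q * ((n':ℝ)+θ))
      = (P * Q) * (θ/((n':ℝ)+θ) * ((n':ℝ)+θ)) := by ring
    _ = (S1 n' k' * θ^k') * θ := by rw [div_mul_cancel₀ _ hne, e]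
    _ = (S1 n' k' : ℝ) * θ^(k'+1) := by ring

lemma N2_base (θ : ℝ) (hθ : 0 < θ) (n k : ℕ) (hn : 0 < n) (hk : 0 < k) :
    N2fun θ n k n k * ∏ i ∈ range n, ((i:ℝ) + θ) = (↑(n-1) : ℝ) * S1 (n-1) k * θ ^ k := by
  obtain ⟨n', rfl⟩ : ∃ n', n = n'+1 := ⟨n-1, by omega⟩
  unfold N2fun
  simp only [Nat.add_sub_cancel]
  rw [crpPr_congr θ (q := fun ω =>
      (crpWalk (n'+1) n' ω = k) ∧ crpWalk (n'+1) (n'+1) ω = k) (fun ω => by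
        constructor
        · rintro ⟨h1, h2, h3⟩; exact ⟨h1, h2⟩
        · rintro ⟨h1, h2⟩; exact ⟨h1, h2, h2⟩)]
  rw [master θ k _ (fun ω : Fin n' → Bool => crpWalk n' n' ω = k)
      (fun ω b => by rw [crpWalk_snoc_of_le (le_refl n')])]
  rw [if_neg (by omega)]
  have h2 : (univ.filter fun ω : Fin n' → Bool =>
      crpWalk n' n' ω = k ∧ crpWalk n' n' ω = k - 1) = ∅ :=
    Finset.filter_false_of_mem (fun ω _ h => by omega)
  have h1 : crpPr n' θ (univ.filter fun ω : Fin n' → Bool =>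
        crpWalk n' n' ω = k ∧ crpWalk n' n' ω = k)
      = crpPr n' θ (univ.filter fun ω => crpWalk n' n' ω = k) :=
    crpPr_congr θ (fun ω => ⟨fun h => h.1, fun h => ⟨h, h⟩⟩)
  rw [h2, h1, crpPr_empty, prod_range_succ]
  have hne : ((n':ℝ) + θ) ≠ 0 := by positivity
  have e := marginal θ hθ n' k
  set P := crpPr n' θ (univ.filter fun ω => crpWalk n' n' ω = k) with hP
  set Q := ∏ i ∈ range n', ((i:ℝ) + θ) with hQ
  calc (0 * (θ/((n':ℝ)+θ)) + P * (1 - θ/((n':ℝ)+θ))) * (Q * ((n':ℝ)+θ))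
      = (P * Q) * ((1 - θ/((n':ℝ)+θ)) * ((n':ℝ)+θ)) := by ring
    _ = (S1 n' k * θ^k) * n' := by
        rw [e]; congr 1; field_simp; ring
    _ = (n' : ℝ) * S1 n' k * θ^k := by ring

lemma key1 (θ : ℝ) (hθ : 0 < θ) (n k : ℕ) (hn : 0 < n) (hk : 0 < k) :
    ∀ m, n ≤ m → ∀ ℓ, N1fun θ n k m ℓ * S1 n k = S1 (n-1) (k-1) * Dfun θ n k m ℓ := by
  intro m hm
  induction m, hm using Nat.le_induction with
  | base =>
    intro ℓ
    by_cases hℓ : ℓ = k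
    · subst hℓ
      have hprod : (∏ i ∈ range n, ((i:ℝ) + θ)) ≠ 0 := by positivity
      apply mul_right_cancel₀ hprod
      calc N1fun θ n ℓ n ℓ * S1 n ℓ * ∏ i ∈ range n, ((i:ℝ) + θ)
          = (N1fun θ n ℓ n ℓ * ∏ i ∈ range n, ((i:ℝ) + θ)) * S1 n ℓ := by ring
        _ = S1 (n-1) (ℓ-1) * θ^ℓ * S1 n ℓ := by rw [N1_base θ hθ n ℓ hn hk]
        _ = (S1 (n-1) (ℓ-1) : ℝ) * (S1 n ℓ * θ^ℓ) := by ring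
        _ = S1 (n-1) (ℓ-1) * (Dfun θ n ℓ n ℓ * ∏ i ∈ range n, ((i:ℝ) + θ)) := by
            rw [D_base θ hθ n ℓ]
        _ = S1 (n-1) (ℓ-1) * Dfun θ n ℓ n ℓ * ∏ i ∈ range n, ((i:ℝ) + θ) := by ring
    · rw [N1_zero θ hℓ, D_zero θ hℓ]; ring
  | succ m hm ih =>
    intro ℓ
    rw [N1fun_succ θ k ℓ hm, Dfun_succ θ k ℓ hm]
    rcases eq_or_ne ℓ 0 with rfl | h0
    · rw [if_pos rfl, if_pos rfl]
      linear_combination (1 - θ/((m:ℝ)+θ)) * ih 0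
    · rw [if_neg h0, if_neg h0]
      linear_combination (θ/((m:ℝ)+θ)) * ih (ℓ-1) + (1 - θ/((m:ℝ)+θ)) * ih ℓ

lemma key2 (θ : ℝ) (hθ : 0 < θ) (n k : ℕ) (hn : 0 < n) (hk : 0 < k) :
    ∀ m, n ≤ m → ∀ ℓ, N2fun θ n k m ℓ * S1 n k = (↑(n-1) : ℝ) * S1 (n-1) k * Dfun θ n k m ℓ := by
  intro m hm
  induction m, hm using Nat.le_induction with
  | base =>
    intro ℓ
    by_cases hℓ : ℓ = k
    · subst hℓ
      have hprod : (∏ i ∈ range n, ((i:ℝ) + θ)) ≠ 0 := by positivity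
      apply mul_right_cancel₀ hprod
      calc N2fun θ n ℓ n ℓ * S1 n ℓ * ∏ i ∈ range n, ((i:ℝ) + θ)
          = (N2fun θ n ℓ n ℓ * ∏ i ∈ range n, ((i:ℝ) + θ)) * S1 n ℓ := by ring
        _ = (↑(n-1) : ℝ) * S1 (n-1) ℓ * θ^ℓ * S1 n ℓ := by rw [N2_base θ hθ n ℓ hn hk]
        _ = (↑(n-1) : ℝ) * S1 (n-1) ℓ * (S1 n ℓ * θ^ℓ) := by ring
        _ = (↑(n-1) : ℝ) * S1 (n-1) ℓ * (Dfun θ n ℓ n ℓ * ∏ i ∈ range n, ((i:ℝ) + θ)) := by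
            rw [D_base θ hθ n ℓ]
        _ = (↑(n-1) : ℝ) * S1 (n-1) ℓ * Dfun θ n ℓ n ℓ * ∏ i ∈ range n, ((i:ℝ) + θ) := by ring
    · rw [N2_zero θ hℓ, D_zero θ hℓ]; ring
  | succ m hm ih =>
    intro ℓ
    rw [N2fun_succ θ k ℓ hm, Dfun_succ θ k ℓ hm]
    rcases eq_or_ne ℓ 0 with rfl | h0
    · rw [if_pos rfl, if_pos rfl]
      linear_combination (1 - θ/((m:ℝ)+θ)) * ih 0
    · rw [if_neg h0, if_neg h0]
      linear_combination (θ/((m:ℝ)+θ)) * ih (ℓ-1) + (1 - θ/((m:ℝ)+θ)) * ih ℓ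

lemma D_pos (θ : ℝ) (hθ : 0 < θ) (n k : ℕ) (hn : 0 < n) (hk : 0 < k) (hkn : k ≤ n) :
    ∀ m, n ≤ m → ∀ ℓ, k ≤ ℓ → ℓ - k ≤ m - n → 0 < Dfun θ n k m ℓ := by
  intro m hm
  induction m, hm using Nat.le_induction with
  | base =>
    intro ℓ h1 h2
    have hℓ : ℓ = k := by omega
    subst hℓ
    have hprod : (0:ℝ) < ∏ i ∈ range n, ((i:ℝ) + θ) := by positivity
    have hS : (0:ℝ) < S1 n ℓ := by exact_mod_cast S1_pos hk hkn
    have hb := D_base θ hθ n ℓ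
    nlinarith [mul_pos hS (pow_pos hθ ℓ)]
  | succ m hm ih =>
    intro ℓ h1 h2
    rw [Dfun_succ θ k ℓ hm]
    have hmθ : (0:ℝ) < (m:ℝ) + θ := by positivity
    have hp : (0:ℝ) < θ/((m:ℝ)+θ) := by positivity
    have h1p : (0:ℝ) < 1 - θ/((m:ℝ)+θ) := by
      rw [sub_pos, div_lt_one hmθ]
      have : (1:ℝ) ≤ (m:ℝ) := by exact_mod_cast Nat.one_le_iff_ne_zero.mpr (by omega)
      linarith
    have hDnn : ∀ j, 0 ≤ Dfun θ n k m j := fun j => crpPr_nonneg hθ _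
    by_cases hc : ℓ - k ≤ m - n
    · have hpos := mul_pos (ih ℓ h1 hc) h1p
      have hnn : (0:ℝ) ≤ (if ℓ = 0 then 0 else Dfun θ n k m (ℓ-1)) * (θ/((m:ℝ)+θ)) := by
        apply mul_nonneg _ hp.le
        split
        · exact le_rfl
        · exact hDnn _
      linarith
    · have hℓ0 : ℓ ≠ 0 := by omega
      rw [if_neg hℓ0]
      have hpos := mul_pos (ih (ℓ-1) (by omega) (by omega)) hp
      have hnn := mul_nonneg (hDnn ℓ) h1p.le
      linarith


/-- Conditionally on `X_m = ℓ`, the time-reversed Chinese-restaurant table-count chain has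
transition probabilities given by the Pascal formula for unsigned Stirling numbers of the
first kind; in particular they do not depend on `θ`. -/
theorem crp_reversed_transitions (θ : ℝ) (hθ : 0 < θ) (m ℓ n k : ℕ)
    (hk : 0 < k) (hkn : k ≤ n) (hn : 0 < n) (hnm : n ≤ m)
    (hkℓ : k ≤ ℓ) (hℓm : ℓ ≤ m) (hadm : ℓ - k ≤ m - n) :
    crpPr m θ (univ.filter fun ω =>
        crpWalk m (n - 1) ω = k - 1 ∧ crpWalk m n ω = k ∧ crpWalk m m ω = ℓ) /
        crpPr m θ (univ.filter fun ω => crpWalk m n ω = k ∧ crpWalk m m ω = ℓ)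
      = (S1 (n - 1) (k - 1) : ℝ) / (S1 n k) ∧
    crpPr m θ (univ.filter fun ω =>
        crpWalk m (n - 1) ω = k ∧ crpWalk m n ω = k ∧ crpWalk m m ω = ℓ) /
        crpPr m θ (univ.filter fun ω => crpWalk m n ω = k ∧ crpWalk m m ω = ℓ)
      = ((n : ℝ) - 1) * (S1 (n - 1) k) / (S1 n k) := by
  have hS : (0:ℝ) < S1 n k := by exact_mod_cast S1_pos hk hkn
  have hD : 0 < Dfun θ n k m ℓ := D_pos θ hθ n k hn hk hkn m hnm ℓ hkℓ hadm
  have e1 := key1 θ hθ n k hn hk m hnm ℓ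
  have e2 := key2 θ hθ n k hn hk m hnm ℓ
  rw [Nat.cast_sub hn, Nat.cast_one] at e2
  unfold Dfun at hD
  unfold N1fun Dfun at e1
  unfold N2fun Dfun at e2
  constructor
  · rw [div_eq_div_iff hD.ne' hS.ne']
    exact e1
  · rw [div_eq_div_iff hD.ne' hS.ne']
    linear_combination e2
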